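/- Suppose χ is the indicator function of a set of integers whose counting function satisfies #{n ≤ x : χ(n)=1} ≤ a·x/(log x)^b for all x ≥ N, where a, b > 0 and N ≥ 3. Then ∑_{n > N} χ(n)·(log log log n − log log log N)/(n log n) ≤ a(1 + 1/log N)/(b² (log N)^b log log N). -/

import Mathlib

open scoped Classical
open Real Filter MeasureTheory

private lemma one_lt_log {t : ℝ} (ht : 3 ≤ t) : 1 < Real.log t := by
  have h3 : Real.exp 1 < 3 := lt_trans Real.exp_one_lt_d9 (by norm_num)
  calc (1:ℝ) < Real.log 3 := by
        rw [Real.lt_log_iff_exp_lt (by norm_num)]; exact h3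
    _ ≤ Real.log t := Real.log_le_log (by norm_num) ht

private lemma log_pos3 {t : ℝ} (ht : 3 ≤ t) : 0 < Real.log t :=
  lt_trans one_pos (one_lt_log ht)

private lemma loglog_pos {t : ℝ} (ht : 3 ≤ t) : 0 < Real.log (Real.log t) :=
  Real.log_pos (one_lt_log ht)

private lemma log3_mono {s t : ℝ} (hs : 3 ≤ s) (hst : s ≤ t) :
    Real.log (Real.log (Real.log s)) ≤ Real.log (Real.log (Real.log t)) := by
  have h1 : Real.log s ≤ Real.log t := Real.log_le_log (by linarith) hst
  have h2 : Real.log (Real.log s) ≤ Real.log (Real.log t) :=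
    Real.log_le_log (log_pos3 hs) h1
  exact Real.log_le_log (loglog_pos hs) h2

private lemma hasDerivAt_logloglog {t : ℝ} (ht : 3 ≤ t) :
    HasDerivAt (fun u => Real.log (Real.log (Real.log u)))
      (1 / (t * Real.log t * Real.log (Real.log t))) t := by
  have ht0 : (0:ℝ) < t := by linarith
  have h1 : (0:ℝ) < Real.log t := log_pos3 ht
  have h2 : (0:ℝ) < Real.log (Real.log t) := loglog_pos ht
  have d1 : HasDerivAt Real.log t⁻¹ t := Real.hasDerivAt_log ht0.ne'
  have d2 : HasDerivAt (fun u => Real.log (Real.log u)) ((Real.log t)⁻¹ * t⁻¹) t :=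
    (Real.hasDerivAt_log h1.ne').comp t d1
  have d3 : HasDerivAt (fun u => Real.log (Real.log (Real.log u)))
      ((Real.log (Real.log t))⁻¹ * ((Real.log t)⁻¹ * t⁻¹)) t := by
    have := (Real.hasDerivAt_log h2.ne').comp t d2; exact this
  convert d3 using 1
  field_simp

private lemma hasDerivAt_logrpow (β : ℝ) {t : ℝ} (ht : 3 ≤ t) :
    HasDerivAt (fun u => Real.log u ^ (-β)) (-β * Real.log t ^ (-1 - β) / t) t := by
  have ht0 : (0:ℝ) < t := by linarith
  have h1 : (0:ℝ) < Real.log t := log_pos3 ht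
  have := (Real.hasDerivAt_log ht0.ne').rpow_const (p := -β) (Or.inl h1.ne')
  convert this using 1
  rw [show (-β - 1 : ℝ) = -1 - β by ring]
  ring

private lemma rpow_combine {x : ℝ} (hx : 0 < x) {p q r : ℝ} (h : p + q = r) :
    x ^ p * x ^ q = x ^ r := by
  rw [← Real.rpow_add hx, h]

private lemma sq_mul_rpow {x : ℝ} (hx : 0 < x) (b : ℝ) : x ^ (2:ℕ) * x ^ b = x ^ (2 + b) := by
  rw [← Real.rpow_natCast x 2, ← Real.rpow_add hx]; norm_num

private lemma self_mul_rpow {x : ℝ} (hx : 0 < x) (b : ℝ) : x * x ^ b = x ^ (1 + b) := by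
  nth_rewrite 1 [← Real.rpow_one x]
  rw [← Real.rpow_add hx]

private lemma int_bound {N : ℝ} (hN : 3 ≤ N) {β : ℝ} (hβ : 0 < β) {M : ℝ} (hM : N ≤ M) :
    ∫ t in Set.Ioc N M,
        (Real.log (Real.log (Real.log t)) - Real.log (Real.log (Real.log N))) *
          Real.log t ^ (-1 - β) / t
      ≤ Real.log N ^ (-β) / (β ^ 2 * Real.log (Real.log N)) := by
  set C := Real.log (Real.log (Real.log N)) with hCdef
  set D := Real.log (Real.log N) with hDdef
  have hD : 0 < D := loglog_pos hN
  set φ : ℝ → ℝ := fun t =>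
    -((Real.log (Real.log (Real.log t)) - C) * Real.log t ^ (-β) / β)
      - Real.log t ^ (-β) / (β ^ 2 * D) with hφdef
  set ψ : ℝ → ℝ := fun t =>
    (Real.log (Real.log (Real.log t)) - C) * Real.log t ^ (-1 - β) / t
      + Real.log t ^ (-1 - β) / (β * t * D)
      - Real.log t ^ (-β) / (β * t * Real.log t * Real.log (Real.log t)) with hψdef
  have h3 : ∀ t ∈ Set.Icc N M, (3:ℝ) ≤ t := fun t htm => le_trans hN htm.1
  have hder : ∀ t ∈ Set.Icc N M, HasDerivAt φ (ψ t) t := by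
    intro t htm
    have ht : 3 ≤ t := h3 t htm
    have ht0 : (0:ℝ) < t := by linarith
    have hx : 0 < Real.log t := log_pos3 ht
    have hy : 0 < Real.log (Real.log t) := loglog_pos ht
    have hu := (hasDerivAt_logloglog ht).sub_const C
    have hv := hasDerivAt_logrpow β ht
    have h := ((hu.mul hv).div_const β).neg.sub (hv.div_const (β ^ 2 * D))
    refine h.congr_deriv ?_
    simp only [hψdef]
    field_simp
    ring
  -- pointwise inequality
  have hmono : ∀ t ∈ Set.Icc N M,
      (Real.log (Real.log (Real.log t)) - C) * Real.log t ^ (-1 - β) / t ≤ ψ t := by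
    intro t htm
    have ht : 3 ≤ t := h3 t htm
    have ht0 : (0:ℝ) < t := by linarith
    have hx : 0 < Real.log t := log_pos3 ht
    have hy : 0 < Real.log (Real.log t) := loglog_pos ht
    have hp : 0 ≤ Real.log t ^ (-1 - β) := (Real.rpow_pos_of_pos hx _).le
    have e : Real.log t ^ (-β) = Real.log t ^ (-1 - β) * Real.log t := by
      rw [show (-β : ℝ) = 1 + (-1 - β) by ring, ← self_mul_rpow hx, mul_comm]
    have h1 : Real.log t ^ (-β) / (β * t * Real.log t * Real.log (Real.log t))
        = Real.log t ^ (-1 - β) / (β * t * Real.log (Real.log t)) := by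
      rw [e]; field_simp
    have hDy : D ≤ Real.log (Real.log t) := by
      exact Real.log_le_log (log_pos3 hN) (Real.log_le_log (by linarith) htm.1)
    have h2 : Real.log t ^ (-1 - β) / (β * t * Real.log (Real.log t))
        ≤ Real.log t ^ (-1 - β) / (β * t * D) := by
      gcongr
    simp only [hψdef]
    rw [h1]
    linarith
  -- continuity / integrability
  have cid : ContinuousOn (fun t : ℝ => t) (Set.Icc N M) := continuousOn_id
  have cl : ContinuousOn Real.log (Set.Icc N M) :=
    cid.log fun t htm => by have := h3 t htm; positivity
  have cll : ContinuousOn (fun t => Real.log (Real.log t)) (Set.Icc N M) :=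
    cl.log fun t htm => (log_pos3 (h3 t htm)).ne'
  have clll : ContinuousOn (fun t => Real.log (Real.log (Real.log t))) (Set.Icc N M) :=
    cll.log fun t htm => (loglog_pos (h3 t htm)).ne'
  have crp1 : ContinuousOn (fun t => Real.log t ^ (-1 - β)) (Set.Icc N M) :=
    cl.rpow_const fun t htm => Or.inl (log_pos3 (h3 t htm)).ne'
  have crp0 : ContinuousOn (fun t => Real.log t ^ (-β)) (Set.Icc N M) :=
    cl.rpow_const fun t htm => Or.inl (log_pos3 (h3 t htm)).ne'
  have tne : ∀ t ∈ Set.Icc N M, t ≠ 0 := fun t htm => by have := h3 t htm; positivity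
  have cint : ContinuousOn (fun t =>
      (Real.log (Real.log (Real.log t)) - C) * Real.log t ^ (-1 - β) / t) (Set.Icc N M) :=
    ((clll.sub continuousOn_const).mul crp1).div cid tne
  have cψ : ContinuousOn ψ (Set.Icc N M) := by
    apply ContinuousOn.sub
    · apply cint.add
      apply crp1.div ((continuousOn_const.mul cid).mul continuousOn_const)
      intro t htm
      have ht := h3 t htm
      have : t ≠ 0 := tne t htm
      simp only [Pi.mul_apply, Pi.pow_apply]
      positivity
    · apply crp0.div (((continuousOn_const.mul cid).mul cl).mul cll)
      intro t htm
      have ht := h3 t htm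
      have h1 : 0 < Real.log t := log_pos3 ht
      have h2 : 0 < Real.log (Real.log t) := loglog_pos ht
      have : (0:ℝ) < t := by linarith
      simp only [Pi.mul_apply, Pi.pow_apply]
      positivity
  have hI1 : IntervalIntegrable (fun t =>
      (Real.log (Real.log (Real.log t)) - C) * Real.log t ^ (-1 - β) / t) volume N M :=
    cint.intervalIntegrable_of_Icc hM
  have hI2 : IntervalIntegrable ψ volume N M := cψ.intervalIntegrable_of_Icc hM
  rw [← intervalIntegral.integral_of_le hM]
  have hNlog : 0 < Real.log N := log_pos3 hN
  calc ∫ t in N..M, (Real.log (Real.log (Real.log t)) - C) * Real.log t ^ (-1 - β) / t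
      ≤ ∫ t in N..M, ψ t := intervalIntegral.integral_mono_on hM hI1 hI2 hmono
    _ = φ M - φ N := intervalIntegral.integral_eq_sub_of_hasDerivAt
        (fun t htm => hder t (by rwa [Set.uIcc_of_le hM] at htm)) hI2
    _ ≤ Real.log N ^ (-β) / (β ^ 2 * D) := by
        have hφN : φ N = -(Real.log N ^ (-β) / (β ^ 2 * D)) := by
          simp [hφdef]
          exact Or.inl (Or.inl (sub_self _))
        have huM : 0 ≤ Real.log (Real.log (Real.log M)) - C := sub_nonneg.mpr (log3_mono hN hM)
        have hvM : 0 ≤ Real.log M ^ (-β) := (Real.rpow_pos_of_pos (log_pos3 (by linarith)) _).le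
        have h1 : 0 ≤ (Real.log (Real.log (Real.log M)) - C) * Real.log M ^ (-β) / β :=
          div_nonneg (mul_nonneg huM hvM) hβ.le
        have h2 : 0 ≤ Real.log M ^ (-β) / (β ^ 2 * D) :=
          div_nonneg hvM (by positivity)
        rw [hφN]
        simp only [hφdef]
        linarith

set_option maxHeartbeats 2000000 in
/-- Partial-summation tail bound: if the counting function of `S` satisfies
`#{n ≤ x : n ∈ S} ≤ a x/(log x)^b` for `x ≥ N`, then
`∑_{n > N, n ∈ S} (log₃ n - log₃ N)/(n log n) ≤ a(1 + 1/log N)/(b² (log N)^b log log N)`. -/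
theorem tail_sum_bound (S : Set ℕ) (a b : ℝ) (ha : 0 < a) (hb : 0 < b)
    (N : ℕ) (hN : 3 ≤ N)
    (hcount : ∀ x : ℝ, (N : ℝ) ≤ x →
      ((((Finset.Icc 1 ⌊x⌋₊).filter (· ∈ S)).card : ℝ)) ≤ a * x / (Real.log x) ^ b) :
    ∑' n : ℕ, (if n ∈ S ∧ N < n then
        (Real.log (Real.log (Real.log n)) - Real.log (Real.log (Real.log N))) /
          (n * Real.log n)
      else 0)
      ≤ a * (1 + 1 / Real.log N) /
          (b ^ 2 * (Real.log N) ^ b * Real.log (Real.log N)) := by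
  have hN3 : (3:ℝ) ≤ (N:ℝ) := by exact_mod_cast hN
  have hlogN1 : 1 < Real.log N := one_lt_log hN3
  have hlogN : 0 < Real.log N := log_pos3 hN3
  have hD : 0 < Real.log (Real.log (N:ℝ)) := loglog_pos hN3
  set C := Real.log (Real.log (Real.log (N:ℝ))) with hCdef
  set R := a * (1 + 1 / Real.log N) /
      (b ^ 2 * Real.log N ^ b * Real.log (Real.log N)) with hRdef
  have hP : 0 < Real.log (N:ℝ) ^ b := Real.rpow_pos_of_pos hlogN b
  have hRpos : 0 ≤ R := by
    rw [hRdef]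
    apply div_nonneg (mul_nonneg ha.le (by positivity))
    exact (mul_nonneg (mul_nonneg (sq_nonneg b) hP.le) hD.le)
  set c : ℕ → ℝ := fun k => if k ∈ S ∧ 1 ≤ k then 1 else 0 with hcdef
  have hc_nonneg : ∀ k, 0 ≤ c k := by
    intro k; rw [hcdef]; dsimp only; split <;> norm_num
  have hA_card : ∀ m : ℕ, (∑ k ∈ Finset.Icc 0 m, c k)
      = (((Finset.Icc 1 m).filter (· ∈ S)).card : ℝ) := by
    intro m
    rw [hcdef]
    calc ∑ k ∈ Finset.Icc 0 m, (if k ∈ S ∧ 1 ≤ k then (1:ℝ) else 0)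
        = ∑ k ∈ (Finset.Icc 0 m).filter (fun k => k ∈ S ∧ 1 ≤ k), (1:ℝ) :=
          (Finset.sum_filter _ _).symm
      _ = (((Finset.Icc 0 m).filter (fun k => k ∈ S ∧ 1 ≤ k)).card : ℝ) := by
          rw [Finset.sum_const, nsmul_eq_mul, mul_one]
      _ = _ := by
          congr 2
          ext k
          simp only [Finset.mem_filter, Finset.mem_Icc]
          constructor
          · rintro ⟨⟨_, h2⟩, hS, h1⟩; exact ⟨⟨h1, h2⟩, hS⟩
          · rintro ⟨⟨h1, h2⟩, hS⟩; exact ⟨⟨Nat.zero_le _, h2⟩, hS, h1⟩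
  set f : ℝ → ℝ := fun t => (Real.log (Real.log (Real.log t)) - C) / (t * Real.log t)
    with hfdef
  set F : ℝ → ℝ := fun t =>
    1 / (t * Real.log t * Real.log (Real.log t) * (t * Real.log t))
      - (Real.log (Real.log (Real.log t)) - C) * (Real.log t + 1) / (t * Real.log t) ^ 2
    with hFdef
  have hfder : ∀ t : ℝ, 3 ≤ t → HasDerivAt f (F t) t := by
    intro t ht
    have ht0 : (0:ℝ) < t := by linarith
    have hx : 0 < Real.log t := log_pos3 ht
    have hy : 0 < Real.log (Real.log t) := loglog_pos ht
    have hu := (hasDerivAt_logloglog ht).sub_const C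
    have hv : HasDerivAt (fun u : ℝ => u * Real.log u) (Real.log t + 1) t := by
      have h := (hasDerivAt_id t).mul (Real.hasDerivAt_log ht0.ne')
      refine h.congr_deriv ?_
      field_simp
      simp only [id]
      ring
    have hvne : t * Real.log t ≠ 0 := by positivity
    have h := hu.div hv hvne
    refine h.congr_deriv ?_
    simp only [hFdef]
    field_simp
  have hf_nonneg : ∀ t : ℝ, (N:ℝ) ≤ t → 0 ≤ f t := by
    intro t ht
    have ht3 : (3:ℝ) ≤ t := le_trans hN3 ht
    have hx : 0 < Real.log t := log_pos3 ht3
    apply div_nonneg (sub_nonneg.mpr (log3_mono hN3 ht))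
    have ht0 : (0:ℝ) < t := by linarith
    positivity
  have hAmono : Monotone (fun t : ℝ => ∑ k ∈ Finset.Icc 0 ⌊t⌋₊, c k) := by
    intro s t hst
    exact Finset.sum_le_sum_of_subset_of_nonneg
      (Finset.Icc_subset_Icc_right (Nat.floor_le_floor hst)) (fun i _ _ => hc_nonneg i)
  have key : ∀ B : ℕ, (∑ k ∈ Finset.Ioc N B, f k * c k) ≤ R := by
    intro B
    by_cases hBN : B ≤ N
    · rw [Finset.Ioc_eq_empty (by omega), Finset.sum_empty]
      exact hRpos
    push_neg at hBN
    have hmain : ∀ x : ℝ, (B:ℝ) ≤ x → (∑ k ∈ Finset.Ioc N B, f k * c k)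
        ≤ a * ((Real.log (Real.log (Real.log x)) - C) * Real.log x ^ (-1 - b)) + R := by
      intro x hxB
      have hNB : (N:ℝ) ≤ (B:ℝ) := by exact_mod_cast hBN.le
      have hxN : (N:ℝ) ≤ x := le_trans hNB hxB
      have hx3 : (3:ℝ) ≤ x := le_trans hN3 hxN
      have hx0 : (0:ℝ) < x := by linarith
      have hlx : 0 < Real.log x := log_pos3 hx3
      have h3Icc : ∀ t ∈ Set.Icc (N:ℝ) x, (3:ℝ) ≤ t := fun t htm => le_trans hN3 htm.1
      have hdiff : ∀ t ∈ Set.Icc (N:ℝ) x, DifferentiableAt ℝ f t :=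
        fun t htm => (hfder t (h3Icc t htm)).differentiableAt
      have hderiv_eq : Set.EqOn F (deriv f) (Set.Icc (N:ℝ) x) :=
        fun t htm => ((hfder t (h3Icc t htm)).deriv).symm
      -- continuity of F
      have cid : ContinuousOn (fun t : ℝ => t) (Set.Icc (N:ℝ) x) := continuousOn_id
      have tne : ∀ t ∈ Set.Icc (N:ℝ) x, t ≠ 0 := fun t htm => by
        have := h3Icc t htm; positivity
      have cl : ContinuousOn Real.log (Set.Icc (N:ℝ) x) := cid.log tne
      have cll : ContinuousOn (fun t => Real.log (Real.log t)) (Set.Icc (N:ℝ) x) :=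
        cl.log fun t htm => (log_pos3 (h3Icc t htm)).ne'
      have clll : ContinuousOn (fun t => Real.log (Real.log (Real.log t)))
          (Set.Icc (N:ℝ) x) := cll.log fun t htm => (loglog_pos (h3Icc t htm)).ne'
      have hFcont : ContinuousOn F (Set.Icc (N:ℝ) x) := by
        rw [hFdef]
        apply ContinuousOn.sub
        · apply continuousOn_const.div (((cid.mul cl).mul cll).mul (cid.mul cl))
          intro t htm
          have ht := h3Icc t htm
          have h1 : 0 < Real.log t := log_pos3 ht
          have h2 : 0 < Real.log (Real.log t) := loglog_pos ht
          have ht0 : (0:ℝ) < t := by linarith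
          simp only [Pi.mul_apply, Pi.pow_apply]
          positivity
        · apply ContinuousOn.div ((clll.sub continuousOn_const).mul (cl.add continuousOn_const))
            ((cid.mul cl).pow 2)
          intro t htm
          have ht := h3Icc t htm
          have h1 : 0 < Real.log t := log_pos3 ht
          have ht0 : (0:ℝ) < t := by linarith
          simp only [Pi.mul_apply, Pi.pow_apply]
          positivity
      have hFint : IntegrableOn (deriv f) (Set.Icc (N:ℝ) x) :=
        (hFcont.integrableOn_Icc).congr_fun hderiv_eq measurableSet_Icc
      have habel := sum_mul_eq_sub_sub_integral_mul c (a := (N:ℝ)) (b := x)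
        (by positivity) hxN hdiff hFint
      rw [Nat.floor_natCast] at habel
      -- integrability of the product
      have hAmeas : AEStronglyMeasurable (fun t : ℝ => ∑ k ∈ Finset.Icc 0 ⌊t⌋₊, c k)
          (MeasureTheory.volume.restrict (Set.Ioc (N:ℝ) x)) :=
        (hAmono.measurable).aestronglyMeasurable
      have hbound : ∀ᵐ t ∂(MeasureTheory.volume.restrict (Set.Ioc (N:ℝ) x)),
          ‖∑ k ∈ Finset.Icc 0 ⌊t⌋₊, c k‖ ≤ ∑ k ∈ Finset.Icc 0 ⌊x⌋₊, c k := by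
        refine (MeasureTheory.ae_restrict_iff' measurableSet_Ioc).mpr
          (Filter.Eventually.of_forall fun t htm => ?_)
        rw [Real.norm_of_nonneg (Finset.sum_nonneg fun i _ => hc_nonneg i)]
        exact hAmono htm.2
      have hprod_int : IntegrableOn
          (fun t => deriv f t * ∑ k ∈ Finset.Icc 0 ⌊t⌋₊, c k) (Set.Ioc (N:ℝ) x) := by
        have h := MeasureTheory.Integrable.bdd_mul
          (hFint.mono_set Set.Ioc_subset_Icc_self) hAmeas hbound
        have heq : (fun t => deriv f t * ∑ k ∈ Finset.Icc 0 ⌊t⌋₊, c k)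
            = fun t => (∑ k ∈ Finset.Icc 0 ⌊t⌋₊, c k) * deriv f t := by
          funext t; ring
        rw [heq]; exact h
      -- pointwise bound on the integrand
      have hpt : ∀ t ∈ Set.Ioc (N:ℝ) x,
          -(deriv f t * ∑ k ∈ Finset.Icc 0 ⌊t⌋₊, c k)
            ≤ a * ((Real.log (Real.log (Real.log t)) - C) * Real.log t ^ (-1 - b) / t
                + (Real.log (Real.log (Real.log t)) - C) * Real.log t ^ (-1 - (b+1)) / t) := by
        intro t htm
        have htN : (N:ℝ) ≤ t := htm.1.le
        have ht3 : (3:ℝ) ≤ t := le_trans hN3 htN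
        have ht0 : (0:ℝ) < t := by linarith
        have hx : 0 < Real.log t := log_pos3 ht3
        have hy : 0 < Real.log (Real.log t) := loglog_pos ht3
        have hB : 0 < Real.log t ^ b := Real.rpow_pos_of_pos hx b
        have hu : 0 ≤ Real.log (Real.log (Real.log t)) - C := sub_nonneg.mpr (log3_mono hN3 htN)
        have hAt : (0:ℝ) ≤ ∑ k ∈ Finset.Icc 0 ⌊t⌋₊, c k :=
          Finset.sum_nonneg fun i _ => hc_nonneg i
        have hcount' : (∑ k ∈ Finset.Icc 0 ⌊t⌋₊, c k) ≤ a * t / Real.log t ^ b := by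
          rw [hA_card ⌊t⌋₊]; exact hcount t htN
        rw [← hderiv_eq ⟨htN, htm.2⟩]
        simp only [hFdef]
        have e2 : Real.log t ^ (-1 - b) * (Real.log t ^ (2:ℕ) * Real.log t ^ b)
            = Real.log t := by
          rw [sq_mul_rpow hx, ← Real.rpow_add hx,
            show (-1 - b + (2 + b) : ℝ) = 1 by ring, Real.rpow_one]
        have e1 : Real.log t ^ (-1 - (b+1)) * (Real.log t ^ (2:ℕ) * Real.log t ^ b)
            = 1 := by
          rw [sq_mul_rpow hx, ← Real.rpow_add hx,
            show (-1 - (b+1) + (2 + b) : ℝ) = 0 by ring, Real.rpow_zero]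
        have q1 : Real.log t ^ (-1 - b)
            = Real.log t / (Real.log t ^ (2:ℕ) * Real.log t ^ b) := by
          rw [eq_div_iff (by positivity)]; exact e2
        have q2 : Real.log t ^ (-1 - (b+1))
            = 1 / (Real.log t ^ (2:ℕ) * Real.log t ^ b) := by
          rw [eq_div_iff (by positivity)]; exact e1
        set At := ∑ k ∈ Finset.Icc 0 ⌊t⌋₊, c k with hAtdef
        have step1 : -((1 / (t * Real.log t * Real.log (Real.log t) * (t * Real.log t))
              - (Real.log (Real.log (Real.log t)) - C) * (Real.log t + 1)
                  / (t * Real.log t) ^ 2) * At)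
            ≤ ((Real.log (Real.log (Real.log t)) - C) * (Real.log t + 1)
                  / (t * Real.log t) ^ 2) * At := by
          have hterm : 0 ≤ (1 / (t * Real.log t * Real.log (Real.log t) * (t * Real.log t))) * At :=
            mul_nonneg (by positivity) hAt
          nlinarith [hterm]
        have hcoef : 0 ≤ (Real.log (Real.log (Real.log t)) - C) * (Real.log t + 1)
            / (t * Real.log t) ^ 2 :=
          div_nonneg (mul_nonneg hu (by linarith)) (by positivity)
        have step2 : ((Real.log (Real.log (Real.log t)) - C) * (Real.log t + 1)
                  / (t * Real.log t) ^ 2) * At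
            ≤ ((Real.log (Real.log (Real.log t)) - C) * (Real.log t + 1)
                  / (t * Real.log t) ^ 2) * (a * t / Real.log t ^ b) :=
          mul_le_mul_of_nonneg_left hcount' hcoef
        have step3 : ((Real.log (Real.log (Real.log t)) - C) * (Real.log t + 1)
                  / (t * Real.log t) ^ 2) * (a * t / Real.log t ^ b)
            = a * ((Real.log (Real.log (Real.log t)) - C) * Real.log t ^ (-1 - b) / t
                + (Real.log (Real.log (Real.log t)) - C) * Real.log t ^ (-1 - (b+1)) / t) := by
          rw [q1, q2]
          field_simp
        linarith
      -- the integral bound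
      have hIoc : -∫ t in Set.Ioc (N:ℝ) x, deriv f t * ∑ k ∈ Finset.Icc 0 ⌊t⌋₊, c k ≤ R := by
        have crp1 : ContinuousOn (fun t => Real.log t ^ (-1 - b)) (Set.Icc (N:ℝ) x) :=
          cl.rpow_const fun t htm => Or.inl (log_pos3 (h3Icc t htm)).ne'
        have crp2 : ContinuousOn (fun t => Real.log t ^ (-1 - (b+1))) (Set.Icc (N:ℝ) x) :=
          cl.rpow_const fun t htm => Or.inl (log_pos3 (h3Icc t htm)).ne'
        have cg1 : ContinuousOn (fun t =>
            (Real.log (Real.log (Real.log t)) - C) * Real.log t ^ (-1 - b) / t)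
            (Set.Icc (N:ℝ) x) := ((clll.sub continuousOn_const).mul crp1).div cid tne
        have cg2 : ContinuousOn (fun t =>
            (Real.log (Real.log (Real.log t)) - C) * Real.log t ^ (-1 - (b+1)) / t)
            (Set.Icc (N:ℝ) x) := ((clll.sub continuousOn_const).mul crp2).div cid tne
        have hg1int : IntegrableOn (fun t =>
            (Real.log (Real.log (Real.log t)) - C) * Real.log t ^ (-1 - b) / t)
            (Set.Ioc (N:ℝ) x) := cg1.integrableOn_Icc.mono_set Set.Ioc_subset_Icc_self
        have hg2int : IntegrableOn (fun t =>
            (Real.log (Real.log (Real.log t)) - C) * Real.log t ^ (-1 - (b+1)) / t)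
            (Set.Ioc (N:ℝ) x) := cg2.integrableOn_Icc.mono_set Set.Ioc_subset_Icc_self
        have hGint : IntegrableOn (fun t =>
            a * ((Real.log (Real.log (Real.log t)) - C) * Real.log t ^ (-1 - b) / t
              + (Real.log (Real.log (Real.log t)) - C) * Real.log t ^ (-1 - (b+1)) / t))
            (Set.Ioc (N:ℝ) x) := ((hg1int.add hg2int).const_mul a)
        have h1 := MeasureTheory.setIntegral_mono_on hprod_int.neg hGint measurableSet_Ioc hpt
        simp only [Pi.neg_apply] at h1
        rw [MeasureTheory.integral_neg] at h1
        refine le_trans h1 ?_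
        have hsplit : ∫ t in Set.Ioc (N:ℝ) x,
            a * ((Real.log (Real.log (Real.log t)) - C) * Real.log t ^ (-1 - b) / t
              + (Real.log (Real.log (Real.log t)) - C) * Real.log t ^ (-1 - (b+1)) / t)
            = a * ((∫ t in Set.Ioc (N:ℝ) x,
                (Real.log (Real.log (Real.log t)) - C) * Real.log t ^ (-1 - b) / t)
              + ∫ t in Set.Ioc (N:ℝ) x,
                (Real.log (Real.log (Real.log t)) - C) * Real.log t ^ (-1 - (b+1)) / t) := by
          rw [MeasureTheory.integral_const_mul, MeasureTheory.integral_add hg1int hg2int]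
        rw [hsplit]
        have i1 := int_bound hN3 hb hxN
        have i2 := int_bound hN3 (by linarith : (0:ℝ) < b + 1) hxN
        rw [hCdef]
        have hstep : a * ((∫ t in Set.Ioc (N:ℝ) x,
                (Real.log (Real.log (Real.log t)) - Real.log (Real.log (Real.log (N:ℝ))))
                  * Real.log t ^ (-1 - b) / t)
              + ∫ t in Set.Ioc (N:ℝ) x,
                (Real.log (Real.log (Real.log t)) - Real.log (Real.log (Real.log (N:ℝ))))
                  * Real.log t ^ (-1 - (b+1)) / t)
            ≤ a * (Real.log (N:ℝ) ^ (-b) / (b ^ 2 * Real.log (Real.log (N:ℝ)))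
              + Real.log (N:ℝ) ^ (-(b+1)) / ((b+1) ^ 2 * Real.log (Real.log (N:ℝ)))) :=
          mul_le_mul_of_nonneg_left (add_le_add i1 i2) ha.le
        refine le_trans hstep ?_
        -- final arithmetic
        have e1 : Real.log (N:ℝ) ^ (-b) = (Real.log (N:ℝ) ^ b)⁻¹ := by
          rw [Real.rpow_neg hlogN.le]
        have e2 : Real.log (N:ℝ) ^ (-(b+1)) = (Real.log (N:ℝ) ^ b)⁻¹ / Real.log (N:ℝ) := by
          rw [show (-(b+1) : ℝ) = -b + (-1) by ring, Real.rpow_add hlogN, e1,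
            Real.rpow_neg_one]
          ring
        rw [hRdef, e1, e2]
        have hmid : a * ((Real.log (N:ℝ) ^ b)⁻¹ / (b ^ 2 * Real.log (Real.log (N:ℝ)))
              + ((Real.log (N:ℝ) ^ b)⁻¹ / Real.log (N:ℝ))
                  / ((b+1) ^ 2 * Real.log (Real.log (N:ℝ))))
            ≤ a * ((Real.log (N:ℝ) ^ b)⁻¹ / (b ^ 2 * Real.log (Real.log (N:ℝ)))
              + ((Real.log (N:ℝ) ^ b)⁻¹ / Real.log (N:ℝ))
                  / (b ^ 2 * Real.log (Real.log (N:ℝ)))) := by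
          have hq1 : (0:ℝ) ≤ (Real.log (N:ℝ) ^ b)⁻¹ / Real.log (N:ℝ) :=
            div_nonneg (inv_nonneg.mpr hP.le) hlogN.le
          have hq2 : b ^ 2 * Real.log (Real.log (N:ℝ))
              ≤ (b+1) ^ 2 * Real.log (Real.log (N:ℝ)) := by nlinarith
          gcongr
        refine le_trans hmid (le_of_eq ?_)
        field_simp
      -- combine
      have hsum_mono : (∑ k ∈ Finset.Ioc N B, f k * c k)
          ≤ ∑ k ∈ Finset.Ioc N ⌊x⌋₊, f k * c k := by
        apply Finset.sum_le_sum_of_subset_of_nonneg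
          (Finset.Ioc_subset_Ioc_right (Nat.le_floor hxB))
        intro i hi _
        have hNi : N < i := (Finset.mem_Ioc.mp hi).1
        exact mul_nonneg (hf_nonneg i (by exact_mod_cast hNi.le)) (hc_nonneg i)
      have hfN0 : f (N:ℝ) = 0 := by
        simp [hfdef, ← hCdef]
      have hfA : f x * (∑ k ∈ Finset.Icc 0 ⌊x⌋₊, c k)
          ≤ a * ((Real.log (Real.log (Real.log x)) - C) * Real.log x ^ (-1 - b)) := by
        have hAx_le : (∑ k ∈ Finset.Icc 0 ⌊x⌋₊, c k) ≤ a * x / Real.log x ^ b := by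
          rw [hA_card ⌊x⌋₊]; exact hcount x hxN
        have hfx : 0 ≤ f x := hf_nonneg x hxN
        refine le_trans (mul_le_mul_of_nonneg_left hAx_le hfx) (le_of_eq ?_)
        simp only [hfdef]
        have hBx : 0 < Real.log x ^ b := Real.rpow_pos_of_pos hlx b
        have q : Real.log x ^ (-1 - b) = 1 / (Real.log x * Real.log x ^ b) := by
          rw [eq_div_iff (by positivity), self_mul_rpow hlx, ← Real.rpow_add hlx,
            show (-1 - b + (1 + b) : ℝ) = 0 by ring, Real.rpow_zero]
        rw [q]
        field_simp
      calc (∑ k ∈ Finset.Ioc N B, f k * c k)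
          ≤ ∑ k ∈ Finset.Ioc N ⌊x⌋₊, f k * c k := hsum_mono
        _ = f x * (∑ k ∈ Finset.Icc 0 ⌊x⌋₊, c k)
            - f (N:ℝ) * (∑ k ∈ Finset.Icc 0 N, c k)
            - ∫ t in Set.Ioc (N:ℝ) x, deriv f t * ∑ k ∈ Finset.Icc 0 ⌊t⌋₊, c k := habel
        _ ≤ a * ((Real.log (Real.log (Real.log x)) - C) * Real.log x ^ (-1 - b)) + R := by
            rw [hfN0]
            have h1 := hIoc
            have h2 := hfA
            linarith
    -- take the limit
    have htend0 : Tendsto (fun x : ℝ =>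
        a * ((Real.log (Real.log (Real.log x)) - C) * Real.log x ^ (-1 - b)))
        atTop (nhds 0) := by
      have hup : Tendsto (fun x : ℝ => (a * (1 + |C|)) * Real.log x ^ (-b)) atTop (nhds 0) := by
        have h1 : Tendsto (fun y : ℝ => y ^ (-b)) atTop (nhds 0) :=
          tendsto_rpow_neg_atTop hb
        have h2 := h1.comp Real.tendsto_log_atTop
        have h3 := h2.const_mul (a * (1 + |C|))
        simpa using h3
      apply squeeze_zero' ?_ ?_ hup
      · filter_upwards [Filter.eventually_ge_atTop ((N:ℝ))] with x hx
        have hx3 : (3:ℝ) ≤ x := le_trans hN3 hx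
        have hu : 0 ≤ Real.log (Real.log (Real.log x)) - C :=
          sub_nonneg.mpr (log3_mono hN3 hx)
        exact mul_nonneg ha.le (mul_nonneg hu
          (Real.rpow_nonneg (log_pos3 hx3).le _))
      · filter_upwards [Filter.eventually_ge_atTop ((N:ℝ))] with x hx
        have hx3 : (3:ℝ) ≤ x := le_trans hN3 hx
        have hlx : 0 < Real.log x := log_pos3 hx3
        have hlx1 : 1 ≤ Real.log x := (one_lt_log hx3).le
        have hub : Real.log (Real.log (Real.log x)) - C ≤ (1 + |C|) * Real.log x := by
          have l1 : Real.log (Real.log (Real.log x)) ≤ Real.log (Real.log x) :=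
            Real.log_le_self (loglog_pos hx3).le
          have l2 : Real.log (Real.log x) ≤ Real.log x := Real.log_le_self hlx.le
          have l3 : -C ≤ |C| := neg_le_abs C
          nlinarith [abs_nonneg C]
        have hrp : 0 ≤ Real.log x ^ (-1 - b) := (Real.rpow_pos_of_pos hlx _).le
        calc a * ((Real.log (Real.log (Real.log x)) - C) * Real.log x ^ (-1 - b))
            ≤ a * (((1 + |C|) * Real.log x) * Real.log x ^ (-1 - b)) :=
              mul_le_mul_of_nonneg_left (mul_le_mul_of_nonneg_right hub hrp) ha.le
          _ = (a * (1 + |C|)) * Real.log x ^ (-b) := by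
              rw [show a * (((1 + |C|) * Real.log x) * Real.log x ^ (-1 - b))
                  = (a * (1 + |C|)) * (Real.log x * Real.log x ^ (-1 - b)) by ring,
                self_mul_rpow hlx, show (1 + (-1 - b) : ℝ) = -b by ring]
    have htend : Tendsto (fun x : ℝ =>
        a * ((Real.log (Real.log (Real.log x)) - C) * Real.log x ^ (-1 - b)) + R)
        atTop (nhds (0 + R)) := htend0.add tendsto_const_nhds
    have hfin := ge_of_tendsto htend (Filter.eventually_atTop.mpr ⟨(B:ℝ), hmain⟩)
    simpa using hfin
  -- conclude via finite partial sums
  apply tsum_le_of_sum_le' hRpos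
  intro s
  set B := s.sup id with hBdef
  have hterm_nonneg : ∀ n : ℕ, (0:ℝ) ≤ (if n ∈ S ∧ N < n then
      (Real.log (Real.log (Real.log (n:ℝ))) - C) / ((n:ℝ) * Real.log (n:ℝ)) else 0) := by
    intro n
    split
    · next h =>
        have hn : (N:ℝ) ≤ (n:ℝ) := by exact_mod_cast h.2.le
        exact hf_nonneg n hn
    · exact le_refl 0
  calc (∑ n ∈ s, if n ∈ S ∧ N < n then
        (Real.log (Real.log (Real.log (n:ℝ))) - C) / ((n:ℝ) * Real.log (n:ℝ)) else 0)
      ≤ ∑ n ∈ s ∪ Finset.Ioc N B, (if n ∈ S ∧ N < n then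
        (Real.log (Real.log (Real.log (n:ℝ))) - C) / ((n:ℝ) * Real.log (n:ℝ)) else 0) :=
        Finset.sum_le_sum_of_subset_of_nonneg Finset.subset_union_left
          (fun i _ _ => hterm_nonneg i)
    _ = ∑ n ∈ Finset.Ioc N B, (if n ∈ S ∧ N < n then
        (Real.log (Real.log (Real.log (n:ℝ))) - C) / ((n:ℝ) * Real.log (n:ℝ)) else 0) := by
        refine (Finset.sum_subset Finset.subset_union_right fun i hi hnot => ?_).symm
        rw [if_neg]
        rintro ⟨hiS, hiN⟩
        apply hnot
        rw [Finset.mem_Ioc]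
        refine ⟨hiN, ?_⟩
        rcases Finset.mem_union.mp hi with h | h
        · exact Finset.le_sup (f := id) h
        · exact absurd h hnot
    _ = ∑ k ∈ Finset.Ioc N B, f k * c k := by
        apply Finset.sum_congr rfl
        intro k hk
        have hkN : N < k := (Finset.mem_Ioc.mp hk).1
        by_cases hkS : k ∈ S
        · rw [if_pos ⟨hkS, hkN⟩]
          simp only [hfdef, hcdef]
          rw [if_pos ⟨hkS, by omega⟩, mul_one]
        · rw [if_neg (by tauto)]
          simp only [hfdef, hcdef]
          rw [if_neg (by tauto), mul_zero]
    _ ≤ R := key B
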